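/- Let U = (−1,1), A > 0, σ ∈ ℝ, let φ : ℝ → ℝ be continuous, and let M : [0,A] → ℝ be continuous. Let ρ : [0,T]×[0,A]×[−1,1] → ℝ be continuous with continuous partial derivatives ∂_t ρ, ∂_x ρ, ∂_{xx} ρ, and suppose that for every a ∈ (0,A) it satisfies pointwise the no-ageing (τ = 0) equation ∂_t ρ(t,a,x) + ∂_x ( ρ(t,a,x) ∫_{−1}^{1} φ(y−x)(y−x) u(t,y) dy ) − (σ²/2) ∂_{xx} ρ(t,a,x) = 0, where u(t,x) = ∫_0^A M(b) ρ(t,b,x) db. Then u itself satisfies pointwise the classical mean-field equation ∂_t u(t,x) + ∂_x ( u(t,x) ∫_{−1}^{1} φ(y−x)(y−x) u(t,y) dy ) − (σ²/2) ∂_{xx} u(t,x) = 0 on (0,T)×(−1,1). -/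

import Mathlib

open MeasureTheory intervalIntegral

/-- Differentiation under an interval integral with jointly continuous data. -/
lemma param_hasDerivAt (a b : ℝ) (F F' : ℝ → ℝ → ℝ)
    (hF : ContinuousOn (fun p : ℝ × ℝ => F p.1 p.2) (Set.univ ×ˢ Set.uIcc a b))
    (hF' : ContinuousOn (fun p : ℝ × ℝ => F' p.1 p.2) (Set.univ ×ˢ Set.uIcc a b))
    (hd : ∀ (s : ℝ), ∀ w ∈ Set.uIcc a b, HasDerivAt (fun s' => F s' w) (F' s w) s)
    (s₀ : ℝ) :
    HasDerivAt (fun s => ∫ w in a..b, F s w) (∫ w in a..b, F' s₀ w) s₀ := by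
  have hcontF : ∀ s : ℝ, ContinuousOn (fun w => F s w) (Set.uIcc a b) := by
    intro s
    exact hF.comp (Continuous.continuousOn (continuous_const.prodMk continuous_id))
      (fun w hw => ⟨trivial, hw⟩)
  have hcontF' : ∀ s : ℝ, ContinuousOn (fun w => F' s w) (Set.uIcc a b) := by
    intro s
    exact hF'.comp (Continuous.continuousOn (continuous_const.prodMk continuous_id))
      (fun w hw => ⟨trivial, hw⟩)
  obtain ⟨C, hC⟩ := ((isCompact_closedBall s₀ 1).prod isCompact_uIcc).exists_bound_of_continuousOn
    (hF'.mono (fun p hp => ⟨trivial, hp.2⟩))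
  refine (intervalIntegral.hasDerivAt_integral_of_dominated_loc_of_deriv_le
    (F := F) (F' := F') (bound := fun _ => C) (Metric.ball_mem_nhds s₀ one_pos) ?_ ?_ ?_ ?_ ?_ ?_).2
  · exact Filter.Eventually.of_forall fun s =>
      (((hcontF s).mono Set.uIoc_subset_uIcc).aestronglyMeasurable measurableSet_uIoc)
  · exact (hcontF s₀).intervalIntegrable
  · exact (((hcontF' s₀).mono Set.uIoc_subset_uIcc).aestronglyMeasurable measurableSet_uIoc)
  · refine Filter.Eventually.of_forall fun w hw s hs => ?_
    exact hC (s, w) ⟨Metric.ball_subset_closedBall hs, Set.uIoc_subset_uIcc hw⟩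
  · exact intervalIntegrable_const
  · exact Filter.Eventually.of_forall fun w hw s _ => hd s w (Set.uIoc_subset_uIcc hw)

/-- Moving-endpoint integral: derivative of `z ↦ ∫_{r-z₀}^{r-z} g w z dw` at `z₀`. -/
lemma edge_hasDerivAt (g : ℝ → ℝ → ℝ) (hg : Continuous fun p : ℝ × ℝ => g p.1 p.2)
    (r z₀ : ℝ) :
    HasDerivAt (fun z => ∫ w in (r - z₀)..(r - z), g w z) (-(g (r - z₀) z₀)) z₀ := by
  have hcz : ∀ z : ℝ, Continuous fun w => g w z := fun z =>
    hg.comp (continuous_id.prodMk continuous_const)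
  set G : ℝ → ℝ := fun z => ∫ w in (r - z₀)..(r - z), g w z₀ with hGdef
  have hΦ : HasDerivAt (fun s => ∫ w in (r - z₀)..s, g w z₀) (g (r - z₀) z₀) (r - z₀) :=
    ((hcz z₀).integral_hasStrictDerivAt (r - z₀) (r - z₀)).hasDerivAt
  have hinner : HasDerivAt (fun z : ℝ => r - z) (-1) z₀ := by
    simpa using ((hasDerivAt_id' z₀).const_sub r)
  have hGd : HasDerivAt G (-(g (r - z₀) z₀)) z₀ := by
    have := HasDerivAt.comp z₀ hΦ hinner
    simpa [mul_comm, Function.comp_def, hGdef] using this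
  have hdiff : ∀ z : ℝ, (∫ w in (r - z₀)..(r - z), g w z) - G z
      = ∫ w in (r - z₀)..(r - z), (g w z - g w z₀) := fun z =>
    (intervalIntegral.integral_sub ((hcz z).intervalIntegrable _ _)
      ((hcz z₀).intervalIntegrable _ _)).symm
  have ho : (fun z => (∫ w in (r - z₀)..(r - z), g w z) - G z) =o[nhds z₀]
      (fun z => z - z₀) := by
    rw [Asymptotics.isLittleO_iff]
    intro c hc
    have hK : IsCompact ((Set.Icc (r - z₀ - 1) (r - z₀ + 1)) ×ˢ Set.Icc (z₀ - 1) (z₀ + 1)) :=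
      isCompact_Icc.prod isCompact_Icc
    have hUC := hK.uniformContinuousOn_of_continuous hg.continuousOn
    rw [Metric.uniformContinuousOn_iff] at hUC
    obtain ⟨δ, hδ, hδ'⟩ := hUC c hc
    filter_upwards [Metric.ball_mem_nhds z₀ (lt_min hδ one_pos)] with z hz
    rw [Metric.mem_ball] at hz
    have hzd : dist z z₀ < δ := lt_of_lt_of_le hz (min_le_left _ _)
    have hz1 : |z - z₀| ≤ 1 := by
      have := lt_of_lt_of_le hz (min_le_right _ _)
      rw [Real.dist_eq] at this
      exact this.le
    have hb : ∀ w ∈ Set.uIoc (r - z₀) (r - z), ‖g w z - g w z₀‖ ≤ c := by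
      intro w hw
      obtain ⟨ha1, ha2⟩ := abs_le.1 hz1
      have hsub : Set.uIcc (r - z₀) (r - z) ⊆ Set.Icc (r - z₀ - 1) (r - z₀ + 1) := by
        rw [← Set.uIcc_of_le (by linarith : r - z₀ - 1 ≤ r - z₀ + 1)]
        apply Set.uIcc_subset_uIcc
        · rw [Set.mem_uIcc]; left; constructor <;> linarith
        · rw [Set.mem_uIcc]; left; constructor <;> linarith
      have hw' : w ∈ Set.Icc (r - z₀ - 1) (r - z₀ + 1) := hsub (Set.uIoc_subset_uIcc hw)
      have hzmem : z ∈ Set.Icc (z₀ - 1) (z₀ + 1) := ⟨by linarith, by linarith⟩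
      have hz₀mem : z₀ ∈ Set.Icc (z₀ - 1) (z₀ + 1) := ⟨by linarith, by linarith⟩
      have hde : dist (w, z) (w, z₀) = dist z z₀ := by
        simp [Prod.dist_eq, max_eq_right dist_nonneg]
      have hlt := hδ' (w, z) ⟨hw', hzmem⟩ (w, z₀) ⟨hw', hz₀mem⟩ (by rw [hde]; exact hzd)
      rw [Real.dist_eq] at hlt
      rw [Real.norm_eq_abs]
      exact hlt.le
    have := intervalIntegral.norm_integral_le_of_norm_le_const hb
    rw [hdiff z]
    calc ‖∫ w in (r - z₀)..(r - z), (g w z - g w z₀)‖ ≤ c * |(r - z) - (r - z₀)| := this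
      _ = c * ‖z - z₀‖ := by rw [show (r - z) - (r - z₀) = -(z - z₀) by ring, abs_neg, Real.norm_eq_abs]
  have hE0 : (∫ w in (r - z₀)..(r - z₀), g w z₀) = 0 := intervalIntegral.integral_same
  rw [hasDerivAt_iff_isLittleO] at hGd ⊢
  have hG0 : G z₀ = 0 := intervalIntegral.integral_same
  have heq : (fun z => (∫ w in (r - z₀)..(r - z), g w z)
        - (∫ w in (r - z₀)..(r - z₀), g w z₀) - (z - z₀) • (-(g (r - z₀) z₀)))
      = fun z => (G z - G z₀ - (z - z₀) • (-(g (r - z₀) z₀)))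
        + ((∫ w in (r - z₀)..(r - z), g w z) - G z) := by
    funext z
    rw [hE0, hG0]
    simp only [smul_eq_mul]
    ring
  rw [heq]
  exact hGd.add ho

/-- in the no-ageing regime (τ = 0) with kernel M(a,b) = M(b), the
effective density u(t,x) = ∫₀^A M(b) ρ(t,b,x) db satisfies the classical
mean-field equation. -/
theorem no_ageing_effective_density_meanfield
    (T A σ : ℝ) (hT : 0 < T) (hA : 0 < A)
    (φ : ℝ → ℝ) (hφ : Continuous φ)
    (M : ℝ → ℝ) (hM_cont : ContinuousOn M (Set.Icc (0:ℝ) A))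
    (ρ : ℝ → ℝ → ℝ → ℝ)
    (hρ_cont : Continuous (fun p : ℝ × ℝ × ℝ => ρ p.1 p.2.1 p.2.2))
    (hρ_t : ∀ t a x, DifferentiableAt ℝ (fun s => ρ s a x) t)
    (hρ_x : ∀ t a x, DifferentiableAt ℝ (fun z => ρ t a z) x)
    (hρ_xx : ∀ t a x, DifferentiableAt ℝ (deriv (fun z => ρ t a z)) x)
    (hρ_t_cont : Continuous (fun p : ℝ × ℝ × ℝ => deriv (fun s => ρ s p.2.1 p.2.2) p.1))
    (hρ_x_cont : Continuous (fun p : ℝ × ℝ × ℝ => deriv (fun z => ρ p.1 p.2.1 z) p.2.2))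
    (hρ_xx_cont : Continuous
      (fun p : ℝ × ℝ × ℝ => deriv (deriv (fun z => ρ p.1 p.2.1 z)) p.2.2))
    (u : ℝ → ℝ → ℝ)
    (hu : ∀ t x, u t x = ∫ b in (0:ℝ)..A, M b * ρ t b x)
    (hPDE : ∀ a ∈ Set.Ioo (0:ℝ) A, ∀ t ∈ Set.Ioo (0:ℝ) T, ∀ x ∈ Set.Ioo (-1:ℝ) 1,
      deriv (fun s => ρ s a x) t +
        deriv (fun z => ρ t a z *
          ∫ y in (-1:ℝ)..1, φ (y - z) * (y - z) * u t y) x -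
        σ ^ 2 / 2 * deriv (deriv (fun z => ρ t a z)) x = 0) :
    ∀ t ∈ Set.Ioo (0:ℝ) T, ∀ x ∈ Set.Ioo (-1:ℝ) 1,
      deriv (fun s => u s x) t +
        deriv (fun z => u t z *
          ∫ y in (-1:ℝ)..1, φ (y - z) * (y - z) * u t y) x -
        σ ^ 2 / 2 * deriv (deriv (fun z => u t z)) x = 0 := by
  intro t ht x hx
  have hMc : ContinuousOn M (Set.uIcc (0:ℝ) A) := by rwa [Set.uIcc_of_le hA.le]
  have cM : ContinuousOn (fun p : ℝ × ℝ => M p.2) (Set.univ ×ˢ Set.uIcc (0:ℝ) A) :=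
    hMc.comp continuous_snd.continuousOn (fun p hp => hp.2)
  -- derivative of u in first variable
  have key_t : ∀ (y t₀ : ℝ), HasDerivAt (fun s => u s y)
      (∫ b in (0:ℝ)..A, M b * deriv (fun s' => ρ s' b y) t₀) t₀ := by
    intro y t₀
    have hrw : (fun s => u s y) = fun s => ∫ b in (0:ℝ)..A, M b * ρ s b y :=
      funext fun s => hu s y
    rw [hrw]
    refine param_hasDerivAt 0 A (fun s b => M b * ρ s b y)
      (fun s b => M b * deriv (fun s' => ρ s' b y) s) ?_ ?_ ?_ t₀
    · exact cM.mul (hρ_cont.comp (continuous_fst.prodMk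
        (continuous_snd.prodMk continuous_const))).continuousOn
    · exact cM.mul (hρ_t_cont.comp (continuous_fst.prodMk
        (continuous_snd.prodMk continuous_const))).continuousOn
    · exact fun s w _ => (hρ_t s w y).hasDerivAt.const_mul (M w)
  -- derivative of u in second variable
  have key_x : ∀ (s z₀ : ℝ), HasDerivAt (fun z => u s z)
      (∫ b in (0:ℝ)..A, M b * deriv (fun z' => ρ s b z') z₀) z₀ := by
    intro s z₀
    have hrw : (fun z => u s z) = fun z => ∫ b in (0:ℝ)..A, M b * ρ s b z :=
      funext fun z => hu s z
    rw [hrw]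
    refine param_hasDerivAt 0 A (fun z b => M b * ρ s b z)
      (fun z b => M b * deriv (fun z' => ρ s b z') z) ?_ ?_ ?_ z₀
    · exact cM.mul (hρ_cont.comp (continuous_const.prodMk
        (continuous_snd.prodMk continuous_fst))).continuousOn
    · exact cM.mul (hρ_x_cont.comp (continuous_const.prodMk
        (continuous_snd.prodMk continuous_fst))).continuousOn
    · exact fun z w _ => (hρ_x s w z).hasDerivAt.const_mul (M w)
  have hux_eq : ∀ s : ℝ, deriv (fun z => u s z)
      = fun z => ∫ b in (0:ℝ)..A, M b * deriv (fun z' => ρ s b z') z :=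
    fun s => funext fun z => (key_x s z).deriv
  -- second derivative in x
  have key_xx : ∀ z₀ : ℝ, HasDerivAt
      (fun z => ∫ b in (0:ℝ)..A, M b * deriv (fun z' => ρ t b z') z)
      (∫ b in (0:ℝ)..A, M b * deriv (deriv (fun z' => ρ t b z')) z₀) z₀ := by
    intro z₀
    refine param_hasDerivAt 0 A (fun z b => M b * deriv (fun z' => ρ t b z') z)
      (fun z b => M b * deriv (deriv (fun z' => ρ t b z')) z) ?_ ?_ ?_ z₀
    · exact cM.mul (hρ_x_cont.comp (continuous_const.prodMk
        (continuous_snd.prodMk continuous_fst))).continuousOn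
    · exact cM.mul (hρ_xx_cont.comp (continuous_const.prodMk
        (continuous_snd.prodMk continuous_fst))).continuousOn
    · exact fun z w _ => (hρ_xx t w z).hasDerivAt.const_mul (M w)
  have huxx : deriv (deriv (fun z => u t z)) x
      = ∫ b in (0:ℝ)..A, M b * deriv (deriv (fun z' => ρ t b z')) x := by
    rw [hux_eq t]
    exact (key_xx x).deriv
  -- continuity of u t and its derivative
  have hu_cont : Continuous (fun y => u t y) := by
    have : Differentiable ℝ (fun y => u t y) := fun y => (key_x t y).differentiableAt
    exact this.continuous
  have hux_cont : Continuous (deriv (fun z => u t z)) := by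
    rw [hux_eq t]
    have : Differentiable ℝ (fun z => ∫ b in (0:ℝ)..A, M b * deriv (fun z' => ρ t b z') z) :=
      fun z => (key_xx z).differentiableAt
    exact this.continuous
  -- the nonlocal velocity V
  set V : ℝ → ℝ := fun z => ∫ y in (-1:ℝ)..1, φ (y - z) * (y - z) * u t y with hVdef
  have hVz : ∀ z : ℝ, (∫ y in (-1:ℝ)..1, φ (y - z) * (y - z) * u t y) = V z := fun z => rfl
  -- substitution form of V
  set g : ℝ → ℝ → ℝ := fun w z => φ w * w * u t (w + z) with hgdef
  have hgc : Continuous fun p : ℝ × ℝ => g p.1 p.2 := by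
    exact ((hφ.comp continuous_fst).mul continuous_fst).mul
      (hu_cont.comp (continuous_fst.add continuous_snd))
  have hcz : ∀ z : ℝ, Continuous fun w => g w z := fun z =>
    hgc.comp (continuous_id.prodMk continuous_const)
  have hVrw : ∀ z : ℝ, V z = ∫ w in (-1 - z)..(1 - z), g w z := by
    intro z
    have h := intervalIntegral.integral_comp_sub_right
      (a := (-1:ℝ)) (b := 1) (fun w => g w z) z
    rw [hVdef]
    simp only [hgdef] at h ⊢
    simp only [sub_add_cancel] at h
    exact h
  -- differentiability of V at x
  have hVd : DifferentiableAt ℝ V x := by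
    have hP1 := edge_hasDerivAt g hgc (-1) x
    have hP3 := edge_hasDerivAt g hgc 1 x
    have hP2 : HasDerivAt (fun z => ∫ w in (-1 - x)..(1 - x), g w z)
        (∫ w in (-1 - x)..(1 - x), φ w * w * deriv (fun y => u t y) (w + x)) x := by
      refine param_hasDerivAt (-1 - x) (1 - x) (fun z w => g w z)
        (fun z w => φ w * w * deriv (fun y => u t y) (w + z)) ?_ ?_ ?_ x
      · exact (hgc.comp (continuous_snd.prodMk continuous_fst)).continuousOn
      · exact (((hφ.comp continuous_snd).mul continuous_snd).mul
          (hux_cont.comp (continuous_snd.add continuous_fst))).continuousOn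
      · intro z w _
        have hc : HasDerivAt (fun z' => u t (w + z'))
            (deriv (fun y => u t y) (w + z)) z := by
          have h1 : HasDerivAt (fun z' : ℝ => w + z') 1 z := by
            simpa using (hasDerivAt_id z).const_add w
          have h2 : HasDerivAt (fun y => u t y) (deriv (fun y => u t y) (w + z)) (w + z) :=
            (key_x t (w + z)).differentiableAt.hasDerivAt
          simpa [Function.comp_def] using h2.comp z h1
        simpa [hgdef, mul_assoc] using hc.const_mul (φ w * w)
    -- assemble
    have hsum := (hP1.neg.add (hP2.add hP3))
    have heq : V =ᶠ[nhds x] fun z => -(∫ w in (-1 - x)..(-1 - z), g w z)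
        + ((∫ w in (-1 - x)..(1 - x), g w z) + (∫ w in (1 - x)..(1 - z), g w z)) := by
      refine Filter.Eventually.of_forall fun z => ?_
      have hint : ∀ p q : ℝ, IntervalIntegrable (fun w => g w z) volume p q :=
        fun p q => (hcz z).intervalIntegrable p q
      have h1 := intervalIntegral.integral_add_adjacent_intervals
        (hint (-1 - z) (-1 - x)) (hint (-1 - x) (1 - z))
      have h2 := intervalIntegral.integral_add_adjacent_intervals
        (hint (-1 - x) (1 - x)) (hint (1 - x) (1 - z))
      have h3 := intervalIntegral.integral_symm (a := -1 - z) (b := -1 - x)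
        (f := fun w => g w z) (μ := volume)
      show V z = _
      rw [hVrw z]
      beta_reduce
      rw [h3]
      linarith [h1, h2]
    exact (hsum.congr_of_eventuallyEq heq).differentiableAt
  -- product rules
  have hprod_u : deriv (fun z => u t z * V z) x
      = deriv (fun z => u t z) x * V x + u t x * deriv V x :=
    deriv_mul (key_x t x).differentiableAt hVd
  have hprod_ρ : ∀ b : ℝ, deriv (fun z => ρ t b z * V z) x
      = deriv (fun z => ρ t b z) x * V x + ρ t b x * deriv V x :=
    fun b => deriv_mul (hρ_x t b x) hVd
  -- integrability of all the b-integrands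
  have mk3 : Continuous fun b : ℝ => ((t, b, x) : ℝ × ℝ × ℝ) :=
    continuous_const.prodMk (continuous_id.prodMk continuous_const)
  have hiDt : IntervalIntegrable (fun b => M b * deriv (fun s => ρ s b x) t) volume 0 A :=
    (hMc.mul (hρ_t_cont.comp mk3).continuousOn).intervalIntegrable
  have hiDx : IntervalIntegrable (fun b => M b * deriv (fun z => ρ t b z) x) volume 0 A :=
    (hMc.mul (hρ_x_cont.comp mk3).continuousOn).intervalIntegrable
  have hiρ : IntervalIntegrable (fun b => M b * ρ t b x) volume 0 A :=
    (hMc.mul (hρ_cont.comp mk3).continuousOn).intervalIntegrable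
  have hiDxx : IntervalIntegrable
      (fun b => M b * deriv (deriv (fun z => ρ t b z)) x) volume 0 A :=
    (hMc.mul (hρ_xx_cont.comp mk3).continuousOn).intervalIntegrable
  -- rewrite goal
  simp only [hVz]
  rw [(key_t x t).deriv, hprod_u, (key_x t x).deriv, huxx, hu t x]
  -- combine into one integral
  have hcomb : (∫ b in (0:ℝ)..A, M b * deriv (fun s' => ρ s' b x) t)
      + ((∫ b in (0:ℝ)..A, M b * deriv (fun z' => ρ t b z') x) * V x
        + (∫ b in (0:ℝ)..A, M b * ρ t b x) * deriv V x)
      - σ ^ 2 / 2 * ∫ b in (0:ℝ)..A, M b * deriv (deriv (fun z' => ρ t b z')) x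
      = ∫ b in (0:ℝ)..A, (M b * deriv (fun s' => ρ s' b x) t
        + (M b * deriv (fun z' => ρ t b z') x * V x + M b * ρ t b x * deriv V x)
        - σ ^ 2 / 2 * (M b * deriv (deriv (fun z' => ρ t b z')) x)) := by
    rw [intervalIntegral.integral_sub (hiDt.add ((hiDx.mul_const _).add (hiρ.mul_const _)))
      (hiDxx.const_mul _),
      intervalIntegral.integral_add hiDt ((hiDx.mul_const _).add (hiρ.mul_const _)),
      intervalIntegral.integral_add (hiDx.mul_const _) (hiρ.mul_const _),
      intervalIntegral.integral_mul_const, intervalIntegral.integral_mul_const,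
      intervalIntegral.integral_const_mul]
  -- the integrand vanishes a.e.
  have hAe : ∀ᵐ b ∂(volume : Measure ℝ), b ≠ A := by
    have : (volume : Measure ℝ) {A} = 0 := measure_singleton A
    exact MeasureTheory.ae_iff.2 (by simpa using this)
  have hz0 : (∫ b in (0:ℝ)..A, (M b * deriv (fun s' => ρ s' b x) t
        + (M b * deriv (fun z' => ρ t b z') x * V x + M b * ρ t b x * deriv V x)
        - σ ^ 2 / 2 * (M b * deriv (deriv (fun z' => ρ t b z')) x)))
      = ∫ b in (0:ℝ)..A, (0:ℝ) := by
    apply intervalIntegral.integral_congr_ae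
    filter_upwards [hAe] with b hbA hbI
    rw [Set.uIoc_of_le hA.le] at hbI
    have hb : b ∈ Set.Ioo (0:ℝ) A := ⟨hbI.1, lt_of_le_of_ne hbI.2 hbA⟩
    have hp := hPDE b hb t ht x hx
    simp only [hVz] at hp
    rw [hprod_ρ b] at hp
    linear_combination (M b) * hp
  rw [hcomb, hz0]
  simp
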